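/- Let R be a ring in which 7 is invertible and every square element is the sum of four idempotents and a nilpotent that pairwise commute. Then 30 is nilpotent in R. -/

import Mathlib

set_option maxHeartbeats 2000000
open Polynomial in
lemma aux15120 {S : Type*} [CommRing S] (e f g k w : S)
    (he : e^2 = e) (hf : f^2 = f) (hg : g^2 = g) (hk : k^2 = k)
    (hw : IsNilpotent w) (hs : (9:S) = e+f+g+k+w) :
    IsNilpotent (15120 : S) := by
  have he3 : e^3 = e := by rw [pow_succ, he, ← pow_two, he]
  have he4 : e^4 = e := by rw [pow_succ, he3, ← pow_two, he]
  have he5 : e^5 = e := by rw [pow_succ, he4, ← pow_two, he]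
  have hf3 : f^3 = f := by rw [pow_succ, hf, ← pow_two, hf]
  have hf4 : f^4 = f := by rw [pow_succ, hf3, ← pow_two, hf]
  have hf5 : f^5 = f := by rw [pow_succ, hf4, ← pow_two, hf]
  have hg3 : g^3 = g := by rw [pow_succ, hg, ← pow_two, hg]
  have hg4 : g^4 = g := by rw [pow_succ, hg3, ← pow_two, hg]
  have hg5 : g^5 = g := by rw [pow_succ, hg4, ← pow_two, hg]
  have hk3 : k^3 = k := by rw [pow_succ, hk, ← pow_two, hk]
  have hk4 : k^4 = k := by rw [pow_succ, hk3, ← pow_two, hk]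
  have hk5 : k^5 = k := by rw [pow_succ, hk4, ← pow_two, hk]
  set E := e+f+g+k with hE
  have hq : E*(E-1)*(E-2)*(E-3)*(E-4) = 0 := by
    rw [hE]; ring_nf
    simp only [he5, he4, he3, he, hf5, hf4, hf3, hf, hg5, hg4, hg3, hg, hk5, hk4, hk3, hk]
    try ring
  set p : S[X] := X*(X - C 1)*(X - C 2)*(X - C 3)*(X - C 4) with hp
  obtain ⟨c, hc⟩ := sub_dvd_eval_sub (E+w) E p
  have hw9 : E + w = 9 := by rw [hs]; try ring
  have hevE : p.eval E = 0 := by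
    simp only [hp, eval_mul, eval_sub, eval_X, eval_C]; exact hq
  have hev9 : p.eval (E+w) = 15120 := by
    rw [hw9]
    simp only [hp, eval_mul, eval_sub, eval_X, eval_C]
    norm_num
  have hkey : (15120 : S) = w * c := by
    rw [← hev9]; linear_combination hc + hevE
  rw [hkey]
  exact (Commute.all w c).isNilpotent_mul_right hw



theorem stmt_13 (R : Type*) [Ring R] (h7 : IsUnit (7 : R))
    (h : ∀ x : R, ∃ e f g k w : R, IsIdempotentElem e ∧ IsIdempotentElem f ∧
      IsIdempotentElem g ∧ IsIdempotentElem k ∧ IsNilpotent w ∧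
      Commute e f ∧ Commute e g ∧ Commute e k ∧ Commute e w ∧
      Commute f g ∧ Commute f k ∧ Commute f w ∧
      Commute g k ∧ Commute g w ∧ Commute k w ∧ x ^ 2 = e + f + g + k + w) :
    IsNilpotent (30 : R) := by
  obtain ⟨e, f, g, k, w, he, hf, hg, hk, hw, hef, heg, hek, hew, hfg, hfk, hfw,
    hgk, hgw, hkw, hsum⟩ := h 3
  have h9 : (9 : R) = e + f + g + k + w := by
    rw [← hsum]; norm_num
  set s : Set R := {e, f, g, k, w} with hsdef
  have hcomm : ∀ a ∈ s, ∀ b ∈ s, a * b = b * a := by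
    intro a ha b hb
    simp only [hsdef, Set.mem_insert_iff, Set.mem_singleton_iff] at ha hb
    rcases ha with rfl|rfl|rfl|rfl|rfl <;> rcases hb with rfl|rfl|rfl|rfl|rfl <;>
      first
        | rfl
        | exact hef | exact hef.symm | exact heg | exact heg.symm
        | exact hek | exact hek.symm | exact hew | exact hew.symm
        | exact hfg | exact hfg.symm | exact hfk | exact hfk.symm
        | exact hfw | exact hfw.symm | exact hgk | exact hgk.symm
        | exact hgw | exact hgw.symm | exact hkw | exact hkw.symm
  set S := Subring.closure s with hS
  have hes : e ∈ S := Subring.subset_closure (by simp [hsdef])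
  have hfs : f ∈ S := Subring.subset_closure (by simp [hsdef])
  have hgs : g ∈ S := Subring.subset_closure (by simp [hsdef])
  have hks : k ∈ S := Subring.subset_closure (by simp [hsdef])
  have hws : w ∈ S := Subring.subset_closure (by simp [hsdef])
  have h1 : (⟨e, hes⟩ : S)^2 = ⟨e, hes⟩ := by ext; push_cast; rw [sq]; exact he
  have h2 : (⟨f, hfs⟩ : S)^2 = ⟨f, hfs⟩ := by ext; push_cast; rw [sq]; exact hf
  have h3 : (⟨g, hgs⟩ : S)^2 = ⟨g, hgs⟩ := by ext; push_cast; rw [sq]; exact hg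
  have h4 : (⟨k, hks⟩ : S)^2 = ⟨k, hks⟩ := by ext; push_cast; rw [sq]; exact hk
  have h5 : IsNilpotent (⟨w, hws⟩ : S) := by
    obtain ⟨n, hn⟩ := hw
    exact ⟨n, by ext; push_cast; exact hn⟩
  have h6 : (9 : S) = ⟨e, hes⟩ + ⟨f, hfs⟩ + ⟨g, hgs⟩ + ⟨k, hks⟩ + ⟨w, hws⟩ := by
    ext; push_cast; exact h9
  have hnil := @aux15120 ↥S (Subring.closureCommRingOfComm hcomm)
    ⟨e, hes⟩ ⟨f, hfs⟩ ⟨g, hgs⟩ ⟨k, hks⟩ ⟨w, hws⟩ h1 h2 h3 h4 h5 h6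
  obtain ⟨n, hn⟩ := hnil
  have hm : (15120 : R) ^ n = 0 := by
    exact_mod_cast congrArg (Subring.subtype S) hn
  have h2160 : (2160 : R) ^ n = 0 := by
    have hmul : ((2160 : R) * 7) ^ n = 0 := by norm_num; exact hm
    have hc : Commute (2160 : R) 7 := by
      have := Nat.cast_commute (2160 : ℕ) (7 : R)
      simpa using this
    rw [hc.mul_pow] at hmul
    exact ((h7.pow n).mul_left_eq_zero).mp hmul
  have h30 : (30 : R) ^ (4 * n) = 0 := by
    have hc : Commute (2160 : R) 375 := by
      have := Nat.cast_commute (2160 : ℕ) (375 : R)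
      simpa using this
    calc (30 : R) ^ (4 * n) = ((2160 : R) * 375) ^ n := by
          rw [pow_mul]; norm_num
      _ = (2160 : R) ^ n * 375 ^ n := hc.mul_pow n
      _ = 0 := by rw [h2160, zero_mul]
  exact ⟨4 * n, h30⟩
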